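/- Let M > 0 and let α, E be real numbers. Suppose g̃ : (−∞, 1) → ℝ is twice differentiable, and define g(s) = s^{α} g̃(1 − s/(2M)) for s ∈ (2M, ∞). Then g satisfies d/ds ( s(s − 2M) g′(s) ) = ( (E² − 1)/4 − 2Mα²/s ) g(s) for all s ∈ (2M, ∞) if and only if g̃ satisfies z(1 − z) g̃″(z) + ( 1 − (2α + 2) z ) g̃′(z) − (1/4)( (2α + 1)² − E² ) g̃(z) = 0 for all z < 0. -/

import Mathlib

open Set

/-- **The substitution `g(s) = s^α g̃(1 - s/(2M))` turns the Hardy ODE into a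
hypergeometric equation.**  For `M > 0`, a twice differentiable `g̃` on `(-∞, 1)`, and
`g(s) = s^α g̃(1 - s/(2M))` on `(2M, ∞)`, the equation
`(s(s-2M) g')' = ((E²-1)/4 - 2Mα²/s) g` on `(2M, ∞)` holds iff
`z(1-z) g̃'' + (1 - (2α+2)z) g̃' - ((2α+1)² - E²)/4 · g̃ = 0` holds for all `z < 0`. -/
theorem hardy_ode_iff_hypergeometric
    (M α E : ℝ) (hM : 0 < M)
    (gt : ℝ → ℝ)
    (hgt : ∀ z < (1:ℝ), DifferentiableAt ℝ gt z)
    (hgt' : ∀ z < (1:ℝ), DifferentiableAt ℝ (deriv gt) z)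
    (g : ℝ → ℝ)
    (hg : ∀ s ∈ Ioi (2*M), g s = s ^ α * gt (1 - s/(2*M))) :
    (∀ s ∈ Ioi (2*M),
        deriv (fun t => t*(t - 2*M) * deriv g t) s
          = ((E^2 - 1)/4 - 2*M*α^2/s) * g s)
      ↔ (∀ z < (0:ℝ),
        z*(1 - z) * deriv (deriv gt) z + (1 - (2*α + 2)*z) * deriv gt z
          - (1/4)*((2*α + 1)^2 - E^2) * gt z = 0) := by
  have h2M : (0:ℝ) < 2*M := by linarith
  have h2M' : (2*M : ℝ) ≠ 0 := ne_of_gt h2M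
  set zf : ℝ → ℝ := fun t => 1 - t/(2*M) with hzf
  have hzlt : ∀ s ∈ Ioi (2*M), zf s < 0 := by
    intro s hs
    have : 1 < s / (2*M) := (one_lt_div h2M).2 hs
    simp only [hzf]; linarith
  have hzderiv : ∀ t : ℝ, HasDerivAt zf (-(2*M)⁻¹) t := by
    intro t
    simpa [one_div] using ((hasDerivAt_id t).div_const (2*M)).const_sub 1
  have hcomp : ∀ s ∈ Ioi (2*M),
      HasDerivAt (fun t => gt (zf t)) (deriv gt (zf s) * (-(2*M)⁻¹)) s := by
    intro s hs
    exact ((hgt _ (lt_trans (hzlt s hs) one_pos)).hasDerivAt).comp s (hzderiv s)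
  have hcomp' : ∀ s ∈ Ioi (2*M),
      HasDerivAt (fun t => deriv gt (zf t)) (deriv (deriv gt) (zf s) * (-(2*M)⁻¹)) s := by
    intro s hs
    exact ((hgt' _ (lt_trans (hzlt s hs) one_pos)).hasDerivAt).comp s (hzderiv s)
  have hs0 : ∀ s ∈ Ioi (2*M), (0:ℝ) < s := fun s hs => lt_trans h2M hs
  have hrpow : ∀ p : ℝ, ∀ s ∈ Ioi (2*M),
      HasDerivAt (fun t : ℝ => t ^ p) (p * s ^ (p-1)) s := by
    intro p s hs
    exact Real.hasDerivAt_rpow_const (Or.inl (ne_of_gt (hs0 s hs)))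
  -- explicit first derivative of g
  set G' : ℝ → ℝ := fun s =>
      α * s ^ (α-1) * gt (zf s) + s ^ α * (deriv gt (zf s) * (-(2*M)⁻¹)) with hG'def
  have hG' : ∀ s ∈ Ioi (2*M), HasDerivAt g (G' s) s := by
    intro s hs
    have h1 : HasDerivAt (fun t : ℝ => t ^ α * gt (zf t)) (G' s) s := by
      simpa [hG'def, mul_comm, mul_assoc] using (hrpow α s hs).fun_mul (hcomp s hs)
    exact h1.congr_of_eventuallyEq
      (Filter.eventuallyEq_of_mem (Ioi_mem_nhds hs) hg)
  have hderivg : ∀ s ∈ Ioi (2*M), deriv g s = G' s := fun s hs => (hG' s hs).deriv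
  -- second derivative machinery: derivative of  t*(t-2M)*G' t
  have key : ∀ s ∈ Ioi (2*M),
      deriv (fun t => t*(t - 2*M) * deriv g t) s - ((E^2 - 1)/4 - 2*M*α^2/s) * g s
        = -(s ^ α) * ((zf s)*(1 - zf s) * deriv (deriv gt) (zf s)
            + (1 - (2*α + 2)*(zf s)) * deriv gt (zf s)
            - (1/4)*((2*α + 1)^2 - E^2) * gt (zf s)) := by
    intro s hs
    have hspos := hs0 s hs
    have hsne : s ≠ 0 := ne_of_gt hspos
    -- derivative of G'
    have hG'' : HasDerivAt G'
        ((α * ((α-1) * s ^ (α-1-1)) * gt (zf s)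
          + (α * s ^ (α-1)) * (deriv gt (zf s) * (-(2*M)⁻¹)))
         + ((α * s ^ (α-1)) * (deriv gt (zf s) * (-(2*M)⁻¹))
          + s ^ α * (deriv (deriv gt) (zf s) * (-(2*M)⁻¹) * (-(2*M)⁻¹)))) s := by
      have t1 : HasDerivAt (fun t : ℝ => α * t ^ (α-1) * gt (zf t))
          (α * ((α-1) * s ^ (α-1-1)) * gt (zf s)
            + (α * s ^ (α-1)) * (deriv gt (zf s) * (-(2*M)⁻¹))) s := by
        exact (((hrpow (α-1) s hs).const_mul α).mul (hcomp s hs))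
      have t2 : HasDerivAt (fun t : ℝ => t ^ α * (deriv gt (zf t) * (-(2*M)⁻¹)))
          ((α * s ^ (α-1)) * (deriv gt (zf s) * (-(2*M)⁻¹))
            + s ^ α * (deriv (deriv gt) (zf s) * (-(2*M)⁻¹) * (-(2*M)⁻¹))) s := by
        have := (hrpow α s hs).fun_mul ((hcomp' s hs).mul_const (-(2*M)⁻¹))
        simpa [mul_assoc, mul_comm, mul_left_comm] using this
      exact t1.add t2
    -- derivative of t*(t-2M)
    have hA : HasDerivAt (fun t : ℝ => t*(t - 2*M)) (1*(s - 2*M) + s*1) s := by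
      exact (hasDerivAt_id s).mul ((hasDerivAt_id s).sub_const (2*M))
    have hF : HasDerivAt (fun t => t*(t - 2*M) * deriv g t)
        ((1*(s - 2*M) + s*1) * G' s + (s*(s - 2*M)) *
          ((α * ((α-1) * s ^ (α-1-1)) * gt (zf s)
            + (α * s ^ (α-1)) * (deriv gt (zf s) * (-(2*M)⁻¹)))
           + ((α * s ^ (α-1)) * (deriv gt (zf s) * (-(2*M)⁻¹))
            + s ^ α * (deriv (deriv gt) (zf s) * (-(2*M)⁻¹) * (-(2*M)⁻¹))))) s := by
      have h := hA.fun_mul hG''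
      refine h.congr_of_eventuallyEq ?_
      filter_upwards [Ioi_mem_nhds hs] with t ht
      rw [hderivg t ht]
    rw [hF.deriv, hg s hs]
    have e1 : s ^ (α-1) = s ^ α / s := by
      rw [Real.rpow_sub hspos, Real.rpow_one]
    have e2 : s ^ (α-1-1) = s ^ α / s / s := by
      rw [Real.rpow_sub hspos, Real.rpow_one, e1]
    simp only [hG'def, hzf, e1, e2]
    field_simp
    ring
  have hrpos : ∀ s ∈ Ioi (2*M), (0:ℝ) < s ^ α :=
    fun s hs => Real.rpow_pos_of_pos (hs0 s hs) α
  constructor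
  · intro H z hz
    set s := 2*M*(1-z) with hsdef
    have hs : s ∈ Ioi (2*M) := by
      simp only [mem_Ioi, hsdef]; nlinarith
    have hzz : zf s = z := by
      simp only [hzf, hsdef]; field_simp; ring
    have hk := key s hs
    rw [H s hs, sub_self] at hk
    have hne : -(s ^ α) ≠ 0 := by
      have := hrpos s hs; intro h; nlinarith
    have := (mul_eq_zero.1 hk.symm).resolve_left hne
    rwa [hzz] at this
  · intro H s hs
    have hk := key s hs
    rw [H (zf s) (hzlt s hs), mul_zero] at hk
    linarith [hk]
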